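/- The median of the beta distribution is strictly increasing in its first parameter: for a, b, ε > 0, M(a,b) < M(a+ε,b), where M(a,b) ∈ (0,1) is the unique point satisfying ∫₀^{M(a,b)} x^{a-1}(1-x)^{b-1} dx = ∫_{M(a,b)}^1 x^{a-1}(1-x)^{b-1} dx. -/

import Mathlib

open MeasureTheory

/-- `M` is the median of the Beta(a,b) distribution. -/
def IsBetaMedian (a b M : ℝ) : Prop :=
  M ∈ Set.Ioo (0 : ℝ) 1 ∧
    (∫ x in Set.Ioo (0 : ℝ) M, x ^ (a - 1) * (1 - x) ^ (b - 1))
      = ∫ x in Set.Ioo M 1, x ^ (a - 1) * (1 - x) ^ (b - 1)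

lemma betaIntegrable (a b : ℝ) (ha : 0 < a) (hb : 0 < b) :
    IntegrableOn (fun x : ℝ => x ^ (a - 1) * (1 - x) ^ (b - 1)) (Set.Ioo 0 1) := by
  have h := (Complex.betaIntegral_convergent (u := a) (v := b) (by simpa) (by simpa)).norm
  have h2 : IntegrableOn (fun x : ℝ => ‖(x:ℂ) ^ ((a:ℂ) - 1) * (1 - (x:ℂ)) ^ ((b:ℂ) - 1)‖)
      (Set.Ioc 0 1) := (intervalIntegrable_iff_integrableOn_Ioc_of_le zero_le_one).mp h
  refine (h2.mono_set Set.Ioo_subset_Ioc_self).congr_fun ?_ measurableSet_Ioo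
  intro x hx
  simp only []
  rw [norm_mul]
  have h1x : (1 : ℂ) - (x:ℂ) = ((1 - x : ℝ) : ℂ) := by push_cast; ring
  rw [h1x, Complex.norm_cpow_eq_rpow_re_of_pos hx.1,
    Complex.norm_cpow_eq_rpow_re_of_pos (by linarith [hx.2])]
  simp

lemma betaPos {a b : ℝ} {x : ℝ} (hx : x ∈ Set.Ioo (0:ℝ) 1) :
    0 < x ^ (a - 1) * (1 - x) ^ (b - 1) :=
  mul_pos (Real.rpow_pos_of_pos hx.1 _) (Real.rpow_pos_of_pos (by linarith [hx.2]) _)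

theorem stmt_7 (a b ε M M' : ℝ) (ha : 0 < a) (hb : 0 < b) (hε : 0 < ε)
    (hM : IsBetaMedian a b M) (hM' : IsBetaMedian (a + ε) b M') :
    M < M' := by
  obtain ⟨⟨hM0, hM1⟩, hMeq⟩ := hM
  obtain ⟨⟨hM'0, hM'1⟩, hM'eq⟩ := hM'
  by_contra hc
  push_neg at hc   -- hc : M' ≤ M
  set f : ℝ → ℝ := fun x => x ^ (a - 1) * (1 - x) ^ (b - 1) with hf
  set g : ℝ → ℝ := fun x => x ^ (a + ε - 1) * (1 - x) ^ (b - 1) with hg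
  have hfi : IntegrableOn f (Set.Ioo 0 1) := betaIntegrable a b ha hb
  have hgi : IntegrableOn g (Set.Ioo 0 1) := betaIntegrable (a + ε) b (by linarith) hb
  have hsub1 : Set.Ioo (0:ℝ) M' ⊆ Set.Ioo 0 1 := Set.Ioo_subset_Ioo le_rfl hM'1.le
  have hsub2 : Set.Ioo M' (1:ℝ) ⊆ Set.Ioo 0 1 := Set.Ioo_subset_Ioo hM'0.le le_rfl
  have hfi1 := hfi.mono_set hsub1
  have hfi2 := hfi.mono_set hsub2
  have hgi1 := hgi.mono_set hsub1
  have hgi2 := hgi.mono_set hsub2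
  have hgf : ∀ x ∈ Set.Ioo (0:ℝ) 1, g x = x ^ ε * f x := by
    intro x hx
    simp only [hf, hg]
    rw [show a + ε - 1 = ε + (a - 1) by ring, Real.rpow_add hx.1]
    ring
  have hA : 0 < ∫ x in Set.Ioo (0:ℝ) M', (M' ^ ε * f x - g x) := by
    rw [setIntegral_pos_iff_support_of_nonneg_ae]
    · refine lt_of_lt_of_le (b := volume (Set.Ioo (0:ℝ) M')) ?_ (measure_mono ?_)
      · rw [Real.volume_Ioo]; simpa using hM'0
      · intro x hx
        refine ⟨?_, hx⟩
        have hx1 := hsub1 hx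
        have hlt : g x < M' ^ ε * f x := by
          rw [hgf x hx1]
          exact mul_lt_mul_of_pos_right
            (Real.rpow_lt_rpow hx1.1.le hx.2 hε) (betaPos hx1)
        simp only [Function.mem_support]
        intro habs; rw [sub_eq_zero] at habs; exact absurd habs.symm hlt.ne
    · refine (ae_restrict_iff' measurableSet_Ioo).mpr (Filter.Eventually.of_forall ?_)
      intro x hx
      have hx1 := hsub1 hx
      have hlt : g x < M' ^ ε * f x := by
        rw [hgf x hx1]
        exact mul_lt_mul_of_pos_right (Real.rpow_lt_rpow hx1.1.le hx.2 hε) (betaPos hx1)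
      simp only [Pi.zero_apply]
      linarith
    · exact (hfi1.const_mul _).sub hgi1
  have hB : 0 < ∫ x in Set.Ioo M' (1:ℝ), (g x - M' ^ ε * f x) := by
    rw [setIntegral_pos_iff_support_of_nonneg_ae]
    · refine lt_of_lt_of_le (b := volume (Set.Ioo M' (1:ℝ))) ?_ (measure_mono ?_)
      · rw [Real.volume_Ioo]; simpa using hM'1
      · intro x hx
        refine ⟨?_, hx⟩
        have hx1 := hsub2 hx
        have hlt : M' ^ ε * f x < g x := by
          rw [hgf x hx1]
          exact mul_lt_mul_of_pos_right (Real.rpow_lt_rpow hM'0.le hx.1 hε) (betaPos hx1)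
        simp only [Function.mem_support]
        intro habs; rw [sub_eq_zero] at habs; exact absurd habs hlt.ne'
    · refine (ae_restrict_iff' measurableSet_Ioo).mpr (Filter.Eventually.of_forall ?_)
      intro x hx
      have hx1 := hsub2 hx
      have hlt : M' ^ ε * f x < g x := by
        rw [hgf x hx1]
        exact mul_lt_mul_of_pos_right (Real.rpow_lt_rpow hM'0.le hx.1 hε) (betaPos hx1)
      simp only [Pi.zero_apply]
      linarith
    · exact hgi2.sub (hfi2.const_mul _)
  rw [integral_sub (hfi1.const_mul _) hgi1, integral_const_mul, sub_pos] at hA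
  rw [integral_sub hgi2 (hfi2.const_mul _), integral_const_mul, sub_pos] at hB
  have hkey : (∫ x in Set.Ioo M' (1:ℝ), f x) < ∫ x in Set.Ioo (0:ℝ) M', f x := by
    have h1 : M' ^ ε * ∫ x in Set.Ioo M' (1:ℝ), f x
        < M' ^ ε * ∫ x in Set.Ioo (0:ℝ) M', f x := by
      calc M' ^ ε * ∫ x in Set.Ioo M' (1:ℝ), f x
          < ∫ x in Set.Ioo M' (1:ℝ), g x := hB
        _ = ∫ x in Set.Ioo (0:ℝ) M', g x := hM'eq.symm
        _ < M' ^ ε * ∫ x in Set.Ioo (0:ℝ) M', f x := hA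
    exact lt_of_mul_lt_mul_left h1 (Real.rpow_pos_of_pos hM'0 ε).le
  have h2 : (∫ x in Set.Ioo (0:ℝ) M', f x) ≤ ∫ x in Set.Ioo (0:ℝ) M, f x := by
    refine setIntegral_mono_set (hfi.mono_set (Set.Ioo_subset_Ioo le_rfl hM1.le)) ?_ ?_
    · exact (ae_restrict_iff' measurableSet_Ioo).mpr
        (Filter.Eventually.of_forall fun x hx =>
          (betaPos (Set.Ioo_subset_Ioo le_rfl hM1.le hx)).le)
    · exact HasSubset.Subset.eventuallyLE (Set.Ioo_subset_Ioo le_rfl hc)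
  have h3 : (∫ x in Set.Ioo M (1:ℝ), f x) ≤ ∫ x in Set.Ioo M' (1:ℝ), f x := by
    refine setIntegral_mono_set hfi2 ?_ ?_
    · exact (ae_restrict_iff' measurableSet_Ioo).mpr
        (Filter.Eventually.of_forall fun x hx => (betaPos (hsub2 hx)).le)
    · exact HasSubset.Subset.eventuallyLE (Set.Ioo_subset_Ioo hc le_rfl)
  rw [hMeq] at h2
  linarith
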